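/- arXiv:1510.08133 — 4 statements merged into one kernel-verified Lean document; each statement's English description precedes it below -/
import Mathlib

section
/- If the constraint S·P = 0 and ‖S‖ = 1 hold at t = 0, then they hold for all time along any solution of dS/dt = μ² S × (P × S), dP/dt = μ² P × (P × S). -/
open Matrix

/-- Euclidean norm on `ℝ³` (as `Fin 3 → ℝ`). -/
noncomputable def enorm3 (v : Fin 3 → ℝ) : ℝ := Real.sqrt (v ⬝ᵥ v)

private lemma dot_hasDerivAt {S P : ℝ → Fin 3 → ℝ} {u v : Fin 3 → ℝ} {t : ℝ}
    (hS : HasDerivAt S u t) (hP : HasDerivAt P v t) :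
    HasDerivAt (fun s => S s ⬝ᵥ P s) (u ⬝ᵥ P t + S t ⬝ᵥ v) t := by
  have hSc := hasDerivAt_pi.1 hS
  have hPc := hasDerivAt_pi.1 hP
  have : HasDerivAt (fun s => ∑ i : Fin 3, S s i * P s i)
      (∑ i : Fin 3, (u i * P t i + S t i * v i)) t :=
    HasDerivAt.fun_sum fun i _ => (hSc i).mul (hPc i)
  simpa [dotProduct, Finset.sum_add_distrib] using this

theorem single_spin_constraints_preserved (μ : ℝ) (S P : ℝ → Fin 3 → ℝ)
    (hS : ∀ t : ℝ, HasDerivAt S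
      (μ ^ 2 • crossProduct (S t) (crossProduct (P t) (S t))) t)
    (hP : ∀ t : ℝ, HasDerivAt P
      (μ ^ 2 • crossProduct (P t) (crossProduct (P t) (S t))) t)
    (h0 : S 0 ⬝ᵥ P 0 = 0) (hn : enorm3 (S 0) = 1) :
    ∀ t : ℝ, S t ⬝ᵥ P t = 0 ∧ enorm3 (S t) = 1 := by
  have hf : ∀ t, HasDerivAt (fun s => S s ⬝ᵥ P s) 0 t := by
    intro t
    have h := dot_hasDerivAt (hS t) (hP t)
    convert h using 1
    simp only [cross_apply, dotProduct, Fin.sum_univ_three, Pi.smul_apply, smul_eq_mul,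
      Matrix.cons_val_zero, Matrix.cons_val_one, Matrix.head_cons, Matrix.cons_val_two,
      Matrix.tail_cons]
    ring
  have hg : ∀ t, HasDerivAt (fun s => S s ⬝ᵥ S s) 0 t := by
    intro t
    have h := dot_hasDerivAt (hS t) (hS t)
    convert h using 1
    simp only [cross_apply, dotProduct, Fin.sum_univ_three, Pi.smul_apply, smul_eq_mul,
      Matrix.cons_val_zero, Matrix.cons_val_one, Matrix.head_cons, Matrix.cons_val_two,
      Matrix.tail_cons]
    ring
  have hfc : ∀ t, S t ⬝ᵥ P t = S 0 ⬝ᵥ P 0 := by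
    intro t
    have := is_const_of_deriv_eq_zero (f := fun s => S s ⬝ᵥ P s)
      (fun s => (hf s).differentiableAt) (fun s => (hf s).deriv) t 0
    simpa using this
  have hgc : ∀ t, S t ⬝ᵥ S t = S 0 ⬝ᵥ S 0 := by
    intro t
    have := is_const_of_deriv_eq_zero (f := fun s => S s ⬝ᵥ S s)
      (fun s => (hg s).differentiableAt) (fun s => (hg s).deriv) t 0
    simpa using this
  have hdiff : DifferentiableOn ℝ (fun s => S s ⬝ᵥ P s) Set.univ := fun s _ =>
    (hf s).differentiableAt.differentiableWithinAt
  intro t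
  constructor
  · rw [hfc t, h0]
  · unfold enorm3 at *
    rw [hgc t]; exact hn
end

section
/- In the extremal equations for two identical coupled spins, with B = μ(P₁×S₁ + P₂×S₂) and κ = (P₁-P₂)·(S₁×S₂), and dynamics dS₁/dt = μ S₁×B + κ S₁×S₂, dS₂/dt = μ S₂×B + κ S₂×S₁, dP₁/dt = μ P₁×B + κ (P₁-P₂)×S₂, dP₂/dt = μ P₂×B + κ (P₂-P₁)×S₁, the vector B(t) is constant in time: dB/dt = 0. -/
open Matrix

lemma hasDerivAt_cross {f g : ℝ → Fin 3 → ℝ} {f' g' : Fin 3 → ℝ} {t : ℝ}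
    (hf : HasDerivAt f f' t) (hg : HasDerivAt g g' t) :
    HasDerivAt (fun s => crossProduct (f s) (g s))
      (crossProduct f' (g t) + crossProduct (f t) g') t := by
  rw [hasDerivAt_pi] at hf hg ⊢
  intro i
  fin_cases i
  · simp only [cross_apply, Pi.add_apply]
    norm_num
    convert (((hf 1).mul (hg 2)).sub ((hf 2).mul (hg 1))) using 1
    exacts [rfl, by ring]
  · simp only [cross_apply, Pi.add_apply]
    norm_num
    convert (((hf 2).mul (hg 0)).sub ((hf 0).mul (hg 2))) using 1
    exacts [rfl, by ring]
  · simp only [cross_apply, Pi.add_apply]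
    norm_num
    convert (((hf 0).mul (hg 1)).sub ((hf 1).mul (hg 0))) using 1
    exacts [rfl, by ring]

theorem extremal_coupled_B_constant (μ : ℝ)
    (S₁ S₂ P₁ P₂ : ℝ → Fin 3 → ℝ) (B : ℝ → Fin 3 → ℝ) (κ : ℝ → ℝ)
    (hB : ∀ t : ℝ, B t = μ • (crossProduct (P₁ t) (S₁ t) + crossProduct (P₂ t) (S₂ t)))
    (hκ : ∀ t : ℝ, κ t = (P₁ t - P₂ t) ⬝ᵥ crossProduct (S₁ t) (S₂ t))
    (hS₁ : ∀ t : ℝ, HasDerivAt S₁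
      (μ • crossProduct (S₁ t) (B t) + κ t • crossProduct (S₁ t) (S₂ t)) t)
    (hS₂ : ∀ t : ℝ, HasDerivAt S₂
      (μ • crossProduct (S₂ t) (B t) + κ t • crossProduct (S₂ t) (S₁ t)) t)
    (hP₁ : ∀ t : ℝ, HasDerivAt P₁
      (μ • crossProduct (P₁ t) (B t) + κ t • crossProduct (P₁ t - P₂ t) (S₂ t)) t)
    (hP₂ : ∀ t : ℝ, HasDerivAt P₂
      (μ • crossProduct (P₂ t) (B t) + κ t • crossProduct (P₂ t - P₁ t) (S₁ t)) t)
    (hc₁ : ∀ t : ℝ, S₁ t ⬝ᵥ P₁ t = 0) (hc₂ : ∀ t : ℝ, S₂ t ⬝ᵥ P₂ t = 0) :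
    ∀ t : ℝ, HasDerivAt B 0 t := by
  intro t
  have hBf : B = fun s => μ • (crossProduct (P₁ s) (S₁ s) + crossProduct (P₂ s) (S₂ s)) :=
    funext hB
  have hd := (((hasDerivAt_cross (hP₁ t) (hS₁ t)).add
      (hasDerivAt_cross (hP₂ t) (hS₂ t))).const_smul μ)
  rw [show (μ • ((fun s => crossProduct (P₁ s) (S₁ s)) + fun s => crossProduct (P₂ s) (S₂ s))) = B from hBf.symm] at hd
  refine (hd.congr_deriv ?_).congr_deriv rfl; symm
  rw [hB t, hκ t]
  funext i
  fin_cases i <;>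
  · simp only [cross_apply, dotProduct, Fin.sum_univ_three, Pi.smul_apply, Pi.sub_apply,
      Pi.add_apply, Pi.zero_apply, smul_eq_mul, Matrix.cons_val_zero, Matrix.cons_val_one,
      Matrix.head_cons, Matrix.cons_val_two, Matrix.tail_cons]
    norm_num [Matrix.cons_val_zero, Matrix.cons_val_one, Matrix.head_cons]
    exact Or.inr (by ring)
end

section
/- Under the same extremal dynamics for two identical coupled spins (with optimal feedback B = μ(P₁×S₁+P₂×S₂) and κ = (P₁-P₂)·(S₁×S₂)), the scalar κ(t) is a constant of the motion. -/
open Matrix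

theorem extremal_coupled_kappa_constant (μ : ℝ)
    (S₁ S₂ P₁ P₂ : ℝ → Fin 3 → ℝ) (B : ℝ → Fin 3 → ℝ) (κ : ℝ → ℝ)
    (hB : ∀ t : ℝ, B t = μ • (crossProduct (P₁ t) (S₁ t) + crossProduct (P₂ t) (S₂ t)))
    (hκ : ∀ t : ℝ, κ t = (P₁ t - P₂ t) ⬝ᵥ crossProduct (S₁ t) (S₂ t))
    (hS₁ : ∀ t : ℝ, HasDerivAt S₁
      (μ • crossProduct (S₁ t) (B t) + κ t • crossProduct (S₁ t) (S₂ t)) t)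
    (hS₂ : ∀ t : ℝ, HasDerivAt S₂
      (μ • crossProduct (S₂ t) (B t) + κ t • crossProduct (S₂ t) (S₁ t)) t)
    (hP₁ : ∀ t : ℝ, HasDerivAt P₁
      (μ • crossProduct (P₁ t) (B t) + κ t • crossProduct (P₁ t - P₂ t) (S₂ t)) t)
    (hP₂ : ∀ t : ℝ, HasDerivAt P₂
      (μ • crossProduct (P₂ t) (B t) + κ t • crossProduct (P₂ t - P₁ t) (S₁ t)) t)
    (hc₁ : ∀ t : ℝ, S₁ t ⬝ᵥ P₁ t = 0) (hc₂ : ∀ t : ℝ, S₂ t ⬝ᵥ P₂ t = 0) :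
    ∀ t : ℝ, κ t = κ 0 := by
  have key : ∀ t : ℝ, HasDerivAt κ 0 t := by
    intro t
    have e1 := hasDerivAt_pi.mp (hS₁ t)
    have e2 := hasDerivAt_pi.mp (hS₂ t)
    have e3 := hasDerivAt_pi.mp (hP₁ t)
    have e4 := hasDerivAt_pi.mp (hP₂ t)
    have hκfun : κ = fun s => (P₁ s 0 - P₂ s 0) * (S₁ s 1 * S₂ s 2 - S₁ s 2 * S₂ s 1)
        + (P₁ s 1 - P₂ s 1) * (S₁ s 2 * S₂ s 0 - S₁ s 0 * S₂ s 2)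
        + (P₁ s 2 - P₂ s 2) * (S₁ s 0 * S₂ s 1 - S₁ s 1 * S₂ s 0) := by
      funext s
      rw [hκ]
      simp [cross_apply, dotProduct, Fin.sum_univ_three]
    rw [hκfun]
    have H := ((((e3 0).sub (e4 0)).mul (((e1 1).mul (e2 2)).sub ((e1 2).mul (e2 1)))).add
      ((((e3 1).sub (e4 1)).mul (((e1 2).mul (e2 0)).sub ((e1 0).mul (e2 2)))))).add
      ((((e3 2).sub (e4 2)).mul (((e1 0).mul (e2 1)).sub ((e1 1).mul (e2 0)))))
    refine H.congr_deriv ?_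
    simp only [hB t, hκ t, cross_apply, dotProduct, Fin.sum_univ_three, Pi.add_apply,
      Pi.smul_apply, Pi.sub_apply, Pi.mul_apply, smul_eq_mul, Matrix.cons_val_zero, Matrix.cons_val_one,
      Matrix.head_cons, Matrix.cons_val_two, Matrix.tail_cons]
    ring
  intro t
  exact is_const_of_deriv_eq_zero (fun x => (key x).differentiableAt)
    (fun x => (key x).deriv) t 0
end

section
/- Under the extremal dynamics for two identical coupled spins with optimal feedback, the Hamiltonian H = (μ²/2)‖P₁×S₁ + P₂×S₂‖² + (1/2)((P₁-P₂)·(S₁×S₂))² is conserved. -/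
open Matrix

private lemma hasDerivAt_cross3 {f g : ℝ → Fin 3 → ℝ} {f' g' : Fin 3 → ℝ} {t : ℝ}
    (hf : HasDerivAt f f' t) (hg : HasDerivAt g g' t) :
    HasDerivAt (fun u => crossProduct (f u) (g u))
      (crossProduct f' (g t) + crossProduct (f t) g') t := by
  rw [hasDerivAt_pi] at hf hg ⊢
  intro i
  have h0f := hf 0; have h1f := hf 1; have h2f := hf 2
  have h0g := hg 0; have h1g := hg 1; have h2g := hg 2
  fin_cases i <;>
    simp only [cross_apply, Pi.add_apply, Matrix.cons_val_zero, Matrix.cons_val_one,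
      Matrix.head_cons, Matrix.cons_val_two, Matrix.tail_cons, Fin.isValue]
  · convert ((h1f.mul h2g).sub (h2f.mul h1g)) using 1
    · rfl
    simp [Fin.mk_zero]
    try ring
  · convert ((h2f.mul h0g).sub (h0f.mul h2g)) using 1
    · rfl
    simp [Fin.mk_one]
    try ring
  · convert ((h0f.mul h1g).sub (h1f.mul h0g)) using 1
    · rfl
    simp [show (⟨2, by norm_num⟩ : Fin 3) = 2 from rfl]
    try ring

private lemma hasDerivAt_dot3 {f g : ℝ → Fin 3 → ℝ} {f' g' : Fin 3 → ℝ} {t : ℝ}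
    (hf : HasDerivAt f f' t) (hg : HasDerivAt g g' t) :
    HasDerivAt (fun u => f u ⬝ᵥ g u) (f' ⬝ᵥ g t + f t ⬝ᵥ g') t := by
  rw [hasDerivAt_pi] at hf hg
  have h0f := hf 0; have h1f := hf 1; have h2f := hf 2
  have h0g := hg 0; have h1g := hg 1; have h2g := hg 2
  simp only [dotProduct, Fin.sum_univ_three]
  convert ((h0f.mul h0g).add (h1f.mul h1g)).add (h2f.mul h2g) using 1
  · rfl
  · rfl
  · rfl
  ring

private lemma key1 (μ k : ℝ) (b s1 s2 p1 p2 : Fin 3 → ℝ) :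
    (crossProduct (μ • crossProduct p1 b + k • crossProduct (p1 - p2) s2) s1 +
        crossProduct p1 (μ • crossProduct s1 b + k • crossProduct s1 s2) +
      (crossProduct (μ • crossProduct p2 b + k • crossProduct (p2 - p1) s1) s2 +
        crossProduct p2 (μ • crossProduct s2 b + k • crossProduct s2 s1)))
      ⬝ᵥ (crossProduct p1 s1 + crossProduct p2 s2) +
    (crossProduct p1 s1 + crossProduct p2 s2) ⬝ᵥ
      (crossProduct (μ • crossProduct p1 b + k • crossProduct (p1 - p2) s2) s1 +
        crossProduct p1 (μ • crossProduct s1 b + k • crossProduct s1 s2) +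
      (crossProduct (μ • crossProduct p2 b + k • crossProduct (p2 - p1) s1) s2 +
        crossProduct p2 (μ • crossProduct s2 b + k • crossProduct s2 s1))) = 0 := by
  simp only [cross_apply, dotProduct, Fin.sum_univ_three, Pi.add_apply, Pi.sub_apply,
    Pi.smul_apply, smul_eq_mul, Matrix.cons_val_zero, Matrix.cons_val_one,
    Matrix.head_cons, Matrix.cons_val_two, Matrix.tail_cons]
  ring

private lemma key2 (μ k : ℝ) (b s1 s2 p1 p2 : Fin 3 → ℝ) :
    ((μ • crossProduct p1 b + k • crossProduct (p1 - p2) s2) -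
        (μ • crossProduct p2 b + k • crossProduct (p2 - p1) s1)) ⬝ᵥ crossProduct s1 s2 +
    (p1 - p2) ⬝ᵥ
      (crossProduct (μ • crossProduct s1 b + k • crossProduct s1 s2) s2 +
        crossProduct s1 (μ • crossProduct s2 b + k • crossProduct s2 s1)) = 0 := by
  simp only [cross_apply, dotProduct, Fin.sum_univ_three, Pi.add_apply, Pi.sub_apply,
    Pi.smul_apply, smul_eq_mul, Matrix.cons_val_zero, Matrix.cons_val_one,
    Matrix.head_cons, Matrix.cons_val_two, Matrix.tail_cons]
  ring

theorem extremal_coupled_hamiltonian_conserved (μ : ℝ)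
    (S₁ S₂ P₁ P₂ : ℝ → Fin 3 → ℝ) (B : ℝ → Fin 3 → ℝ) (κ : ℝ → ℝ)
    (hB : ∀ t : ℝ, B t = μ • (crossProduct (P₁ t) (S₁ t) + crossProduct (P₂ t) (S₂ t)))
    (hκ : ∀ t : ℝ, κ t = (P₁ t - P₂ t) ⬝ᵥ crossProduct (S₁ t) (S₂ t))
    (hS₁ : ∀ t : ℝ, HasDerivAt S₁
      (μ • crossProduct (S₁ t) (B t) + κ t • crossProduct (S₁ t) (S₂ t)) t)
    (hS₂ : ∀ t : ℝ, HasDerivAt S₂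
      (μ • crossProduct (S₂ t) (B t) + κ t • crossProduct (S₂ t) (S₁ t)) t)
    (hP₁ : ∀ t : ℝ, HasDerivAt P₁
      (μ • crossProduct (P₁ t) (B t) + κ t • crossProduct (P₁ t - P₂ t) (S₂ t)) t)
    (hP₂ : ∀ t : ℝ, HasDerivAt P₂
      (μ • crossProduct (P₂ t) (B t) + κ t • crossProduct (P₂ t - P₁ t) (S₁ t)) t)
    (hc₁ : ∀ t : ℝ, S₁ t ⬝ᵥ P₁ t = 0) (hc₂ : ∀ t : ℝ, S₂ t ⬝ᵥ P₂ t = 0) :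
    ∀ t : ℝ,
      μ ^ 2 / 2 * enorm3 (crossProduct (P₁ t) (S₁ t) + crossProduct (P₂ t) (S₂ t)) ^ 2
          + 1 / 2 * κ t ^ 2 =
        μ ^ 2 / 2 * enorm3 (crossProduct (P₁ 0) (S₁ 0) + crossProduct (P₂ 0) (S₂ 0)) ^ 2
          + 1 / 2 * κ 0 ^ 2 := by
  -- the Hamiltonian, with the norm squared written as a dot product
  set H : ℝ → ℝ := fun u =>
    μ ^ 2 / 2 * ((crossProduct (P₁ u) (S₁ u) + crossProduct (P₂ u) (S₂ u)) ⬝ᵥ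
      (crossProduct (P₁ u) (S₁ u) + crossProduct (P₂ u) (S₂ u))) + 1 / 2 * κ u ^ 2 with hH
  have hderiv : ∀ u : ℝ, HasDerivAt H 0 u := by
    intro u
    have hM : HasDerivAt
        (fun v => crossProduct (P₁ v) (S₁ v) + crossProduct (P₂ v) (S₂ v))
        (crossProduct (μ • crossProduct (P₁ u) (B u) + κ u • crossProduct (P₁ u - P₂ u) (S₂ u)) (S₁ u) +
          crossProduct (P₁ u) (μ • crossProduct (S₁ u) (B u) + κ u • crossProduct (S₁ u) (S₂ u)) +
          (crossProduct (μ • crossProduct (P₂ u) (B u) + κ u • crossProduct (P₂ u - P₁ u) (S₁ u)) (S₂ u) +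
            crossProduct (P₂ u) (μ • crossProduct (S₂ u) (B u) + κ u • crossProduct (S₂ u) (S₁ u)))) u :=
      (hasDerivAt_cross3 (hP₁ u) (hS₁ u)).add (hasDerivAt_cross3 (hP₂ u) (hS₂ u))
    have hkd : HasDerivAt κ
        (((μ • crossProduct (P₁ u) (B u) + κ u • crossProduct (P₁ u - P₂ u) (S₂ u)) -
            (μ • crossProduct (P₂ u) (B u) + κ u • crossProduct (P₂ u - P₁ u) (S₁ u))) ⬝ᵥ
          crossProduct (S₁ u) (S₂ u) +
          (P₁ u - P₂ u) ⬝ᵥ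
            (crossProduct (μ • crossProduct (S₁ u) (B u) + κ u • crossProduct (S₁ u) (S₂ u)) (S₂ u) +
              crossProduct (S₁ u) (μ • crossProduct (S₂ u) (B u) + κ u • crossProduct (S₂ u) (S₁ u)))) u := by
      have h := hasDerivAt_dot3 ((hP₁ u).sub (hP₂ u))
        (hasDerivAt_cross3 (hS₁ u) (hS₂ u))
      exact h.congr_of_eventuallyEq (Filter.Eventually.of_forall hκ)
    have hκ0 : HasDerivAt κ 0 u := by
      rw [show (0 : ℝ) = _ from (key2 μ (κ u) (B u) (S₁ u) (S₂ u) (P₁ u) (P₂ u)).symm]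
      exact hkd
    have hdot := hasDerivAt_dot3 hM hM
    rw [key1 μ (κ u) (B u) (S₁ u) (S₂ u) (P₁ u) (P₂ u)] at hdot
    have h := (hdot.const_mul (μ ^ 2 / 2)).add ((hκ0.pow 2).const_mul (1 / 2))
    have h0 : (μ ^ 2 / 2 * 0 + 1 / 2 * (2 * κ u ^ 1 * 0) : ℝ) = 0 := by ring
    rw [hH]
    exact h0 ▸ h
  have hconst : ∀ t : ℝ, H t = H 0 := fun t =>
    is_const_of_deriv_eq_zero (fun u => (hderiv u).differentiableAt)
      (fun u => (hderiv u).deriv) t 0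
  intro t
  have hen : ∀ v : Fin 3 → ℝ, enorm3 v ^ 2 = v ⬝ᵥ v := by
    intro v
    have : (0:ℝ) ≤ v ⬝ᵥ v :=
      Finset.sum_nonneg fun i _ => mul_self_nonneg _
    unfold enorm3
    exact Real.sq_sqrt this
  rw [hen, hen]
  exact hconst t
end
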